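/- Let F̂(η) = (1/t) log f(w_{t,η}) be the log-transformed meta objective. Then for every η ≥ 0, |F̂'(η)| ≤ 4L³ / (c_min² α (L − α)). In particular the meta-gradient of the log-transformed objective is bounded polynomially in the problem parameters, uniformly in the unroll length t. -/

import Mathlib

set_option maxHeartbeats 1600000


/-- For the log-transformed meta objective `F̂(η) = (1/t) log f(w_{t,η})`,
the meta-gradient is polynomially bounded:  `|F̂'(η)| ≤ 4L³ / (c_min² α (L − α))` for every
`η ≥ 0`, uniformly in the unroll length `t`. -/
theorem stmt3 (d t : ℕ) (hd : 2 ≤ d) (ht : 1 ≤ t)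
    (lam c : Fin d → ℝ)
    (hpos : ∀ i, 0 < lam i)
    (hdec : ∀ i j : Fin d, i ≤ j → lam j ≤ lam i)
    (L α : ℝ)
    (hLdef : L = lam ⟨0, by omega⟩)
    (hadef : α = lam ⟨d - 1, by omega⟩)
    (hgap : α < L)
    (hcnorm : ∑ i, c i ^ 2 = 1)
    (cmin : ℝ)
    (hcmindef : cmin = min |c ⟨0, by omega⟩| |c ⟨d - 1, by omega⟩|)
    (hcmin : 0 < cmin)
    (F : ℝ → ℝ)
    (hF : ∀ η : ℝ,
      F η = (1 / (t : ℝ)) *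
        Real.log ((1 / 2) * ∑ i, c i ^ 2 * lam i * (1 - η * lam i) ^ (2 * t))) :
    ∀ η : ℝ, 0 ≤ η → |deriv F η| ≤ 4 * L ^ 3 / (cmin ^ 2 * α * (L - α)) := by
  intro η hη
  set i0 : Fin d := ⟨0, by omega⟩ with hi0
  set iN : Fin d := ⟨d - 1, by omega⟩ with hiN
  have hapos : 0 < α := hadef ▸ hpos iN
  have hLpos : 0 < L := hLdef ▸ hpos i0
  have hlamL : ∀ i, lam i ≤ L := fun i => hLdef ▸ hdec i0 i (by simp [hi0, Fin.le_def])
  have hlama : ∀ i, α ≤ lam i := fun i =>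
    hadef ▸ hdec i iN (by simp [hiN, Fin.le_def]; omega)
  set M : ℝ := max |1 - η * α| |1 - η * L| with hM
  -- lower bound on M
  have hMlb : L - α ≤ 2 * L * M := by
    have h1 : L - α = α * (η * L - 1) + L * (1 - η * α) := by ring
    have h2 : L - α ≤ α * |1 - η * L| + L * |1 - η * α| := by
      rw [h1]
      have := abs_add_le (α * (η * L - 1)) (L * (1 - η * α))
      have ha1 : |α * (η * L - 1)| = α * |1 - η * L| := by
        rw [abs_mul, abs_of_pos hapos, abs_sub_comm]
      have ha2 : |L * (1 - η * α)| = L * |1 - η * α| := by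
        rw [abs_mul, abs_of_pos hLpos]
      calc α * (η * L - 1) + L * (1 - η * α)
          ≤ |α * (η * L - 1) + L * (1 - η * α)| := le_abs_self _
        _ ≤ |α * (η * L - 1)| + |L * (1 - η * α)| := abs_add_le _ _
        _ = α * |1 - η * L| + L * |1 - η * α| := by rw [ha1, ha2]
    have hb1 : |1 - η * L| ≤ M := le_max_right _ _
    have hb2 : |1 - η * α| ≤ M := le_max_left _ _
    nlinarith [abs_nonneg (1 - η * α), abs_nonneg (1 - η * L)]
  have hMpos : 0 < M := by nlinarith
  -- each |1 - η * lam i| ≤ M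
  have hMi : ∀ i, |1 - η * lam i| ≤ M := by
    intro i
    rw [abs_le]
    constructor
    · have : 1 - η * L ≤ 1 - η * lam i := by nlinarith [hlamL i]
      have h2 : -M ≤ 1 - η * L := by
        have := neg_abs_le (1 - η * L)
        have := le_max_right |1 - η * α| |1 - η * L|
        linarith
      linarith
    · have : 1 - η * lam i ≤ 1 - η * α := by nlinarith [hlama i]
      have h2 : 1 - η * α ≤ M := le_trans (le_abs_self _) (le_max_left _ _)
      linarith
  set g : ℝ → ℝ := fun x => (1 / 2) * ∑ i, c i ^ 2 * lam i * (1 - x * lam i) ^ (2 * t)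
    with hg
  set D : ℝ := (1 / 2) * ∑ i, c i ^ 2 * lam i *
      ((2 * t : ℕ) * (1 - η * lam i) ^ (2 * t - 1) * (-(lam i))) with hD
  -- derivative of g
  have hgd : HasDerivAt g D η := by
    apply HasDerivAt.const_mul
    apply HasDerivAt.fun_sum
    intro i _
    apply HasDerivAt.const_mul
    have h1 : HasDerivAt (fun x : ℝ => 1 - x * lam i) (-(lam i)) η := by
      simpa using ((hasDerivAt_id η).mul_const (lam i)).const_sub 1
    exact h1.pow (2 * t)
  -- even power absolute value
  have habs_pow : ∀ x : ℝ, |x| ^ (2 * t) = x ^ (2 * t) := by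
    intro x; rw [pow_mul, pow_mul, sq_abs]
  -- lower bound for g η
  have hterm_nonneg : ∀ i ∈ Finset.univ,
      0 ≤ c i ^ 2 * lam i * (1 - η * lam i) ^ (2 * t) := by
    intro i _
    have h1 : 0 ≤ (1 - η * lam i) ^ (2 * t) := by
      rw [← habs_pow]; positivity
    exact mul_nonneg (mul_nonneg (sq_nonneg _) (hpos i).le) h1
  have hcmin0 : cmin ^ 2 ≤ c i0 ^ 2 := by
    have h1 : cmin ≤ |c i0| := hcmindef ▸ min_le_left _ _
    have := sq_abs (c i0)
    nlinarith [abs_nonneg (c i0)]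
  have hcminN : cmin ^ 2 ≤ c iN ^ 2 := by
    have h1 : cmin ≤ |c iN| := hcmindef ▸ min_le_right _ _
    have := sq_abs (c iN)
    nlinarith [abs_nonneg (c iN)]
  have hglb : cmin ^ 2 * α / 2 * M ^ (2 * t) ≤ g η := by
    rcases le_total |1 - η * α| |1 - η * L| with hc | hc
    · -- M = |1 - η L|, use term i0
      have hMeq : M = |1 - η * L| := max_eq_right hc
      have hsingle : c i0 ^ 2 * lam i0 * (1 - η * lam i0) ^ (2 * t) ≤
          ∑ i, c i ^ 2 * lam i * (1 - η * lam i) ^ (2 * t) :=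
        Finset.single_le_sum hterm_nonneg (Finset.mem_univ i0)
      have hpow : M ^ (2 * t) = (1 - η * lam i0) ^ (2 * t) := by
        rw [hMeq, ← hLdef, habs_pow]
      have h2 : cmin ^ 2 * α * M ^ (2 * t) ≤
          c i0 ^ 2 * lam i0 * (1 - η * lam i0) ^ (2 * t) := by
        rw [hpow]
        have hp : 0 ≤ (1 - η * lam i0) ^ (2 * t) := by rw [← habs_pow]; positivity
        have hA : cmin ^ 2 * α ≤ c i0 ^ 2 * lam i0 :=
          mul_le_mul hcmin0 (hlama i0) hapos.le (sq_nonneg _)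
        exact mul_le_mul_of_nonneg_right hA hp
      show cmin ^ 2 * α / 2 * M ^ (2 * t) ≤
        (1 / 2) * ∑ i, c i ^ 2 * lam i * (1 - η * lam i) ^ (2 * t)
      linarith
    · -- M = |1 - η α|, use term iN
      have hMeq : M = |1 - η * α| := max_eq_left hc
      have hsingle : c iN ^ 2 * lam iN * (1 - η * lam iN) ^ (2 * t) ≤
          ∑ i, c i ^ 2 * lam i * (1 - η * lam i) ^ (2 * t) :=
        Finset.single_le_sum hterm_nonneg (Finset.mem_univ iN)
      have hpow : M ^ (2 * t) = (1 - η * lam iN) ^ (2 * t) := by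
        rw [hMeq, ← hadef, habs_pow]
      have h2 : cmin ^ 2 * α * M ^ (2 * t) ≤
          c iN ^ 2 * lam iN * (1 - η * lam iN) ^ (2 * t) := by
        rw [hpow]
        have hp : 0 ≤ (1 - η * lam iN) ^ (2 * t) := by rw [← habs_pow]; positivity
        have hA : cmin ^ 2 * α ≤ c iN ^ 2 * lam iN :=
          mul_le_mul hcminN hadef.le hapos.le (sq_nonneg _)
        exact mul_le_mul_of_nonneg_right hA hp
      show cmin ^ 2 * α / 2 * M ^ (2 * t) ≤
        (1 / 2) * ∑ i, c i ^ 2 * lam i * (1 - η * lam i) ^ (2 * t)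
      linarith
  have hgpos : 0 < g η := by
    have : 0 < cmin ^ 2 * α / 2 * M ^ (2 * t) := by positivity
    linarith
  -- upper bound for |D|
  have hDub : |D| ≤ t * L ^ 2 * M ^ (2 * t - 1) := by
    have hterm : ∀ i ∈ Finset.univ,
        |c i ^ 2 * lam i * ((2 * t : ℕ) * (1 - η * lam i) ^ (2 * t - 1) * (-(lam i)))|
          ≤ c i ^ 2 * (2 * t * L ^ 2 * M ^ (2 * t - 1)) := by
      intro i _
      have h1 : |c i ^ 2 * lam i * ((2 * t : ℕ) * (1 - η * lam i) ^ (2 * t - 1) * (-(lam i)))|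
          = c i ^ 2 * lam i * (2 * t) * |(1 - η * lam i) ^ (2 * t - 1)| * lam i := by
        simp [abs_mul, abs_neg, abs_of_nonneg (sq_nonneg (c i)),
          abs_of_pos (hpos i), Nat.abs_cast]
        push_cast
        ring
      rw [h1]
      have h2 : |(1 - η * lam i) ^ (2 * t - 1)| ≤ M ^ (2 * t - 1) := by
        rw [abs_pow]
        exact pow_le_pow_left₀ (abs_nonneg _) (hMi i) _
      have hll : lam i * lam i ≤ L ^ 2 := by nlinarith [hpos i, hlamL i]
      calc c i ^ 2 * lam i * (2 * t) * |(1 - η * lam i) ^ (2 * t - 1)| * lam i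
          = c i ^ 2 * (2 * t) * (lam i * lam i * |(1 - η * lam i) ^ (2 * t - 1)|) := by
            ring
        _ ≤ c i ^ 2 * (2 * t) * (L ^ 2 * M ^ (2 * t - 1)) := by
            refine mul_le_mul_of_nonneg_left ?_ (by positivity)
            exact mul_le_mul hll h2 (abs_nonneg _) (by positivity)
        _ = c i ^ 2 * (2 * t * L ^ 2 * M ^ (2 * t - 1)) := by ring
    calc |D| = (1 / 2) * |∑ i, c i ^ 2 * lam i *
            ((2 * t : ℕ) * (1 - η * lam i) ^ (2 * t - 1) * (-(lam i)))| := by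
          rw [hD, abs_mul, abs_of_nonneg (by norm_num : (0:ℝ) ≤ 1 / 2)]
      _ ≤ (1 / 2) * ∑ i, |c i ^ 2 * lam i *
            ((2 * t : ℕ) * (1 - η * lam i) ^ (2 * t - 1) * (-(lam i)))| := by
          have := Finset.abs_sum_le_sum_abs (fun i => c i ^ 2 * lam i *
            ((2 * t : ℕ) * (1 - η * lam i) ^ (2 * t - 1) * (-(lam i)))) Finset.univ
          linarith
      _ ≤ (1 / 2) * ∑ i, c i ^ 2 * (2 * t * L ^ 2 * M ^ (2 * t - 1)) := by
          gcongr with i hi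
          exact hterm i hi
      _ = t * L ^ 2 * M ^ (2 * t - 1) := by
          rw [← Finset.sum_mul, hcnorm]; ring
  -- compute deriv F
  have hFfun : F = fun x => (1 / (t : ℝ)) * Real.log (g x) := funext fun x => hF x
  have hderiv : deriv F η = (1 / (t : ℝ)) * (D / g η) := by
    rw [hFfun]
    exact ((hgd.log (ne_of_gt hgpos)).const_mul (1 / (t : ℝ))).deriv
  have htpos : (0:ℝ) < t := by exact_mod_cast ht
  -- main bound
  have hMpow : M ^ (2 * t) = M ^ (2 * t - 1) * M := by
    rw [← pow_succ]; congr 1; omega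
  have hkey : |deriv F η| ≤ 2 * L ^ 2 / (cmin ^ 2 * α * M) := by
    rw [hderiv, abs_mul, abs_div, abs_div, abs_one, abs_of_pos htpos,
      abs_of_pos hgpos]
    rw [show |D| / g η = |D| / g η from rfl]
    rw [one_div]
    rw [show (↑t:ℝ)⁻¹ = 1 / ↑t by rw [one_div]]
    have hstep : |D| / g η ≤ (t * L ^ 2 * M ^ (2 * t - 1)) /
        (cmin ^ 2 * α / 2 * M ^ (2 * t)) := by
      apply div_le_div₀ (by positivity) hDub (by positivity) hglb
    have heq : (t * L ^ 2 * M ^ (2 * t - 1)) / (cmin ^ 2 * α / 2 * M ^ (2 * t))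
        = t * (2 * L ^ 2 / (cmin ^ 2 * α * M)) := by
      rw [hMpow]
      have h1 : M ^ (2 * t - 1) ≠ 0 := ne_of_gt (pow_pos hMpos _)
      field_simp
    calc 1 / (t:ℝ) * (|D| / g η)
        ≤ 1 / (t:ℝ) * ((t * L ^ 2 * M ^ (2 * t - 1)) /
            (cmin ^ 2 * α / 2 * M ^ (2 * t))) := by
          gcongr
      _ = 2 * L ^ 2 / (cmin ^ 2 * α * M) := by
          rw [heq]; field_simp
  refine le_trans hkey ?_
  rw [div_le_div_iff₀ (mul_pos (mul_pos (pow_pos hcmin 2) hapos) hMpos)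
    (mul_pos (mul_pos (pow_pos hcmin 2) hapos) (sub_pos.mpr hgap))]
  nlinarith [sq_nonneg cmin, mul_pos (mul_pos (pow_pos hcmin 2) hapos) hMpos,
    mul_le_mul_of_nonneg_left hMlb (le_of_lt (mul_pos (pow_pos hcmin 2) hapos)),
    mul_pos hLpos hLpos]
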